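/- Let $w_+, w_- \in \mathbb{C} \setminus \{0\}$ be nonzero complex numbers such that the angle between $w_+$ and $w_-$ does not exceed $\theta$ for some $0 \le \theta < \pi$, and let $w = w_+ + w_-$ (so $w \ne 0$). Then $\left| \mathrm{Im} \frac{w_+ - w_-}{w} \right| \le \tan(\theta/2)$. -/

import Mathlib

noncomputable def cangle (u v : ℂ) : ℝ :=
  Real.arccos ((u * (starRingEnd ℂ) v).re / (‖u‖ * ‖v‖))

private lemma aux_key (c s A B r i ab : ℝ) (hs0 : 0 ≤ s) (hc1 : -1 < c) (hcle : c ≤ 1)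
    (hsc : s^2 + c^2 = 1) (hab0 : 0 < ab) (hiab : i^2 = ab^2 - r^2)
    (hrab : ab*c ≤ r) (hABab : 2*ab ≤ A + B) :
    0 < A + B + 2*r ∧ |2*i| * (1+c) ≤ s * (A+B+2*r) := by
  have hc1' : (0:ℝ) < 1 + c := by linarith
  have habr : 0 < ab + r := by nlinarith [mul_pos hab0 hc1']
  have hD0 : 0 < A + B + 2*r := by linarith
  refine ⟨hD0, ?_⟩
  have h4 : |(2:ℝ)*i|^2 = 4*i^2 := by rw [sq_abs]; ring
  have hsc' : s^2 = 1 - c^2 := by linarith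
  have key : (s*(A+B+2*r))^2 - (|(2:ℝ)*i| * (1+c))^2 =
      (1-c)*(1+c)*((A+B+2*r)^2 - 4*(ab+r)^2)
      + 4*(1+c)*(ab+r)*((1-c)*(ab+r) - (1+c)*(ab-r)) := by
    rw [mul_pow, mul_pow, h4]
    linear_combination (A+B+2*r)^2 * hsc' - 4*(1+c)^2 * hiab
  have hX : 0 ≤ (1-c)*(1+c)*((A+B+2*r)^2 - 4*(ab+r)^2) := by
    apply mul_nonneg (mul_nonneg (by linarith) hc1'.le)
    nlinarith
  have hY : 0 ≤ 4*(1+c)*(ab+r)*((1-c)*(ab+r) - (1+c)*(ab-r)) := by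
    apply mul_nonneg (by positivity)
    nlinarith
  have hL : (|(2:ℝ)*i| * (1+c))^2 ≤ (s*(A+B+2*r))^2 := by linarith
  exact (pow_le_pow_iff_left₀ (mul_nonneg (abs_nonneg _) hc1'.le)
    (mul_nonneg hs0 hD0.le) two_ne_zero).1 hL

set_option maxHeartbeats 800000 in
theorem stmt1 (θ : ℝ) (hθ0 : 0 ≤ θ) (hθπ : θ < Real.pi)
    (wp wm : ℂ) (hwp : wp ≠ 0) (hwm : wm ≠ 0)
    (hang : cangle wp wm ≤ θ) :
    |((wp - wm) / (wp + wm)).im| ≤ Real.tan (θ / 2) := by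
  set c := Real.cos θ with hc
  set s := Real.sin θ with hs
  have hs0 : 0 ≤ s := Real.sin_nonneg_of_nonneg_of_le_pi hθ0 hθπ.le
  have hc1 : -1 < c := by
    have h := Real.cos_lt_cos_of_nonneg_of_le_pi hθ0 le_rfl hθπ
    rw [Real.cos_pi] at h
    exact h
  have hsc : s ^ 2 + c ^ 2 = 1 := Real.sin_sq_add_cos_sq θ
  have hcoshalf : 0 < Real.cos (θ / 2) := by
    apply Real.cos_pos_of_mem_Ioo
    constructor
    · linarith [Real.pi_pos]
    · linarith
  have htan : Real.tan (θ / 2) = s / (1 + c) := by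
    have h1 : 1 + c = 2 * Real.cos (θ / 2) ^ 2 := by
      have := Real.cos_two_mul (θ / 2)
      rw [hc]
      have h2 : 2 * (θ/2) = θ := by ring
      rw [h2] at this
      linarith
    have h2 : s = 2 * Real.sin (θ / 2) * Real.cos (θ / 2) := by
      have := Real.sin_two_mul (θ / 2)
      rw [hs]
      have h3 : 2 * (θ/2) = θ := by ring
      rw [h3] at this
      linarith
    rw [Real.tan_eq_sin_div_cos, h1, h2]
    field_simp
  obtain ⟨p1, p2⟩ := wp
  obtain ⟨m1, m2⟩ := wm
  have hwp' : p1 ≠ 0 ∨ p2 ≠ 0 := by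
    by_contra h
    push_neg at h
    exact hwp (by simp [Complex.ext_iff, h.1, h.2])
  have hwm' : m1 ≠ 0 ∨ m2 ≠ 0 := by
    by_contra h
    push_neg at h
    exact hwm (by simp [Complex.ext_iff, h.1, h.2])
  set A := p1^2 + p2^2 with hA
  set B := m1^2 + m2^2 with hB
  have hA0 : 0 < A := by
    rcases hwp' with h | h
    · have := abs_pos.2 h; nlinarith [sq_nonneg p2, sq_abs p1]
    · have := abs_pos.2 h; nlinarith [sq_nonneg p1, sq_abs p2]
  have hB0 : 0 < B := by
    rcases hwm' with h | h
    · have := abs_pos.2 h; nlinarith [sq_nonneg m2, sq_abs m1]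
    · have := abs_pos.2 h; nlinarith [sq_nonneg m1, sq_abs m2]
  set r := p1*m1 + p2*m2 with hr
  set i := p2*m1 - p1*m2 with hi
  set a := Real.sqrt A with ha
  set b := Real.sqrt B with hb
  have ha2 : a^2 = A := Real.sq_sqrt hA0.le
  have hb2 : b^2 = B := Real.sq_sqrt hB0.le
  have ha0 : 0 < a := Real.sqrt_pos.2 hA0
  have hb0 : 0 < b := Real.sqrt_pos.2 hB0
  have hab0 : 0 < a * b := mul_pos ha0 hb0
  have hlag : r^2 + i^2 = A * B := by rw [hr, hi, hA, hB]; ring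
  have hrab : a * b * c ≤ r := by
    have habs : ‖(⟨p1, p2⟩ : ℂ)‖ = a ∧ ‖(⟨m1, m2⟩ : ℂ)‖ = b := by
      constructor <;> rw [Complex.norm_def, Complex.normSq_mk] <;>
        [rw [ha, hA]; rw [hb, hB]] <;> ring_nf
    have hre : ((⟨p1,p2⟩ : ℂ) * (starRingEnd ℂ) ⟨m1,m2⟩).re = r := by
      simp [Complex.mul_re, hr]
    rw [cangle, hre, habs.1, habs.2] at hang
    have hr2 : r^2 ≤ (a*b)^2 := by nlinarith [sq_nonneg i]
    have hb1 : r / (a*b) ≤ 1 := by rw [div_le_one hab0]; nlinarith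
    have hb2' : -1 ≤ r / (a*b) := by rw [le_div_iff₀ hab0]; nlinarith
    have hmono := Real.cos_le_cos_of_nonneg_of_le_pi (Real.arccos_nonneg _) hθπ.le hang
    rw [Real.cos_arccos hb2' hb1] at hmono
    calc a * b * c ≤ a * b * (r / (a*b)) := by
          exact mul_le_mul_of_nonneg_left hmono hab0.le
      _ = r := by field_simp
  have hab2 : (a*b)^2 = A * B := by rw [mul_pow, ha2, hb2]
  have hiab : i^2 = (a*b)^2 - r^2 := by rw [hab2]; linarith
  have hABab : 2*(a*b) ≤ A + B := by
    have h := two_mul_le_add_sq a b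
    rw [ha2, hb2] at h
    linarith
  have hcle : c ≤ 1 := Real.cos_le_one θ
  obtain ⟨hD0, hI⟩ := aux_key c s A B r i (a*b) hs0 hc1 hcle hsc hab0 hiab hrab hABab
  have him : ((⟨p1,p2⟩ - ⟨m1,m2⟩ : ℂ) / (⟨p1,p2⟩ + ⟨m1,m2⟩ : ℂ)).im = 2*i / (A + B + 2*r) := by
    rw [Complex.div_im]
    simp only [Complex.sub_re, Complex.sub_im, Complex.add_re, Complex.add_im,
      Complex.normSq_apply]
    have hD : (p1 + m1) * (p1 + m1) + (p2 + m2) * (p2 + m2) = A + B + 2*r := by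
      rw [hA, hB, hr]; ring
    rw [hD]
    field_simp
    rw [hi]; ring
  rw [him, htan, abs_div, abs_of_pos hD0, div_le_div_iff₀ hD0 (by linarith)]
  linarith [hI]
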